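/- For every connected simple graph G=(V,E) with |V| ≥ 3, there exists S ⊊ V with |S| = ⌈|V|/2⌉ or |S| = ⌈|V|/2⌉ + 1 such that G[S] is a proportionally dense subgraph. -/

import Mathlib

set_option linter.unusedSectionVars false


open SimpleGraph

/-- Number of neighbors of `v` inside `T`. -/
noncomputable def degIn {W : Type*} (G : SimpleGraph W) (T : Set W) (v : W) : ℕ :=
  (T ∩ G.neighborSet v).ncard

/-- `G[S]` is a proportionally dense subgraph. -/
def IsPDS {W : Type*} (G : SimpleGraph W) (S : Set W) : Prop :=
  S ⊂ Set.univ ∧ 2 ≤ S.ncard ∧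
    ∀ u ∈ S, degIn G Sᶜ u * (S.ncard - 1) ≤ degIn G S u * Sᶜ.ncard

namespace PDSAux

variable {V : Type*} [Fintype V] [DecidableEq V] (G : SimpleGraph V) [DecidableRel G.Adj]

/-- Integer adjacency indicator. -/
def adZ (x y : V) : ℤ := if G.Adj x y then 1 else 0

/-- Integer membership indicator. -/
def chiZ (S : Finset V) (x : V) : ℤ := if x ∈ S then 1 else 0

/-- Number of neighbors of `w` outside `S`, as an integer sum. -/
def cZ (S : Finset V) (w : V) : ℤ := ∑ y, (1 - chiZ S y) * adZ G w y

/-- Number of neighbors of `w` inside `S`, as an integer sum. -/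
def bZ (S : Finset V) (w : V) : ℤ := ∑ y, chiZ S y * adZ G w y

/-- Size of the cut between `S` and its complement. -/
def cutZ (S : Finset V) : ℤ := ∑ x, chiZ S x * cZ G S x

/-- Number of neighbors of `w` inside `A`, as a natural number. -/
def nin (A : Finset V) (w : V) : ℕ := (A.filter (fun y => G.Adj w y)).card

lemma adZ_symm (x y : V) : adZ G x y = adZ G y x := by
  unfold adZ
  by_cases h : G.Adj x y
  · rw [if_pos h, if_pos h.symm]
  · rw [if_neg h, if_neg (fun h' => h h'.symm)]

lemma adZ_self (x : V) : adZ G x x = 0 := by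
  unfold adZ
  rw [if_neg (G.irrefl)]

lemma bZ_eq_nin (A : Finset V) (w : V) : bZ G A w = (nin G A w : ℤ) := by
  unfold bZ nin
  have h1 : ∀ y ∈ Finset.univ, chiZ A y * adZ G w y
      = if y ∈ A ∧ G.Adj w y then (1 : ℤ) else 0 := by
    intro y _
    by_cases h1 : y ∈ A <;> by_cases h2 : G.Adj w y <;>
      simp [chiZ, adZ, h1, h2]
  rw [Finset.sum_congr rfl h1, Finset.sum_boole]
  congr 1
  rw [show Finset.univ.filter (fun y => y ∈ A ∧ G.Adj w y)
      = A.filter (fun y => G.Adj w y) from by ext z; simp]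

lemma cZ_eq_nin (A : Finset V) (w : V) : cZ G A w = (nin G Aᶜ w : ℤ) := by
  have h : cZ G A w = bZ G Aᶜ w := by
    unfold cZ bZ
    refine Finset.sum_congr rfl fun y _ => ?_
    by_cases h1 : y ∈ A <;> simp [chiZ, h1]
  rw [h, bZ_eq_nin]

lemma sum_delta_mul (w : V) (h : V → ℤ) :
    ∑ y, (if y = w then (1 : ℤ) else 0) * h y = h w := by
  simp only [ite_mul, one_mul, zero_mul]
  rw [Finset.sum_ite_eq' Finset.univ w h]
  simp

lemma chiZ_swap {S : Finset V} {u v : V} (hu : u ∈ S) (hv : v ∉ S) (x : V) :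
    chiZ (insert v (S.erase u)) x
      = chiZ S x - (if x = u then 1 else 0) + (if x = v then 1 else 0) := by
  have huv : u ≠ v := fun h => hv (h ▸ hu)
  unfold chiZ
  by_cases hxu : x = u
  · subst hxu
    simp [Finset.mem_insert, Finset.mem_erase, huv, hu]
  · by_cases hxv : x = v
    · subst hxv
      simp [Finset.mem_insert, hv, hxu]
    · by_cases hxS : x ∈ S <;>
        simp [Finset.mem_insert, Finset.mem_erase, hxu, hxv, hxS]

lemma cZ_swap {S : Finset V} {u v : V} (hu : u ∈ S) (hv : v ∉ S) (x : V) :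
    cZ G (insert v (S.erase u)) x = cZ G S x + adZ G x u - adZ G x v := by
  unfold cZ
  have h : ∀ y ∈ Finset.univ, (1 - chiZ (insert v (S.erase u)) y) * adZ G x y
      = (1 - chiZ S y) * adZ G x y
        + (if y = u then (1 : ℤ) else 0) * adZ G x y
        - (if y = v then (1 : ℤ) else 0) * adZ G x y := by
    intro y _
    rw [chiZ_swap hu hv y]
    ring
  rw [Finset.sum_congr rfl h, Finset.sum_sub_distrib, Finset.sum_add_distrib,
    sum_delta_mul, sum_delta_mul]

lemma cutZ_swap {S : Finset V} {u v : V} (hu : u ∈ S) (hv : v ∉ S) :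
    cutZ G (insert v (S.erase u))
      = cutZ G S + (bZ G S u - cZ G S u) + (cZ G S v - bZ G S v) + 2 * adZ G u v := by
  unfold cutZ
  have key : ∀ x ∈ Finset.univ, chiZ (insert v (S.erase u)) x * cZ G (insert v (S.erase u)) x
      = (chiZ S x * cZ G S x + chiZ S x * adZ G x u - chiZ S x * adZ G x v
          + (if x = v then (1 : ℤ) else 0) * (cZ G S x + adZ G x u - adZ G x v))
        - (if x = u then (1 : ℤ) else 0) * (cZ G S x + adZ G x u - adZ G x v) := by
    intro x _
    rw [cZ_swap G hu hv x, chiZ_swap hu hv x]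
    ring
  rw [Finset.sum_congr rfl key, Finset.sum_sub_distrib, Finset.sum_add_distrib,
    Finset.sum_sub_distrib, Finset.sum_add_distrib, sum_delta_mul, sum_delta_mul]
  have hbu : ∑ x, chiZ S x * adZ G x u = bZ G S u := by
    unfold bZ
    exact Finset.sum_congr rfl fun x _ => by rw [adZ_symm]
  have hbv : ∑ x, chiZ S x * adZ G x v = bZ G S v := by
    unfold bZ
    exact Finset.sum_congr rfl fun x _ => by rw [adZ_symm]
  rw [hbu, hbv, adZ_self, adZ_self, adZ_symm G v u]
  ring

lemma nin_insert {B : Finset V} {w : V} (hw : w ∉ B) (x : V) :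
    nin G (insert w B) x = nin G B x + (if G.Adj x w then 1 else 0) := by
  unfold nin
  rw [Finset.filter_insert]
  split_ifs with h
  · rw [Finset.card_insert_of_notMem (fun hmem => hw (Finset.mem_of_mem_filter w hmem))]
  · simp

lemma degIn_coe (A : Finset V) (w : V) : degIn G (↑A) w = nin G A w := by
  unfold degIn nin
  rw [show (↑A : Set V) ∩ G.neighborSet w = ↑(A.filter (fun y => G.Adj w y)) from by
    ext z; simp [SimpleGraph.mem_neighborSet]]
  exact Set.ncard_coe_finset _

end PDSAux

open PDSAux in
/-- Theorem 4 of the paper: every connected graph with at least 3 vertices has a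
PDS of size `⌈|V|/2⌉` or `⌈|V|/2⌉ + 1`. -/
theorem exists_pds_half {V : Type*} [Fintype V] (G : SimpleGraph V)
    (hconn : G.Connected) (h3 : 3 ≤ Fintype.card V) :
    ∃ S : Set V,
      (S.ncard = (Fintype.card V + 1) / 2 ∨ S.ncard = (Fintype.card V + 1) / 2 + 1) ∧
      IsPDS G S := by
  classical
  set n := Fintype.card V with hn
  set s := (n + 1) / 2 with hs
  have hsn : s ≤ n := by omega
  -- choose S of size s minimizing the cut
  obtain ⟨S₀, -, hS₀card⟩ := Finset.exists_subset_card_eq (s := (Finset.univ : Finset V)) (n := s)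
    (by rw [Finset.card_univ]; exact hsn)
  obtain ⟨S, hSmem, hSmin⟩ := Finset.exists_min_image
    (Finset.powersetCard s (Finset.univ : Finset V)) (cutZ G)
    ⟨S₀, Finset.mem_powersetCard.mpr ⟨Finset.subset_univ _, hS₀card⟩⟩
  have hScard : S.card = s := (Finset.mem_powersetCard.mp hSmem).2
  by_cases hgood : ∀ u ∈ S, nin G Sᶜ u ≤ nin G S u
  · -- the minimizer itself is a PDS of size s
    refine ⟨↑S, Or.inl (by rw [Set.ncard_coe_finset, hScard]), ?_, ?_, ?_⟩
    · rw [Set.ssubset_univ_iff]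
      intro hcontra
      have hcard := congrArg Set.ncard hcontra
      rw [Set.ncard_coe_finset, hScard, Set.ncard_univ, Nat.card_eq_fintype_card] at hcard
      omega
    · rw [Set.ncard_coe_finset, hScard]; omega
    · intro u hu
      have huS : u ∈ S := Finset.mem_coe.mp hu
      rw [show ((↑S : Set V))ᶜ = ↑(Sᶜ) from (Finset.coe_compl S).symm]
      rw [degIn_coe, degIn_coe, Set.ncard_coe_finset, Set.ncard_coe_finset,
        Finset.card_compl, hScard]
      exact Nat.mul_le_mul (hgood u huS) (by omega)
  · -- otherwise, complement plus the bad vertex is a PDS of size n - s + 1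
    push_neg at hgood
    obtain ⟨u, huS, hub⟩ := hgood
    set A : Finset V := insert u Sᶜ with hA
    have huSc : u ∉ Sᶜ := by simp [huS]
    have hAcard : A.card = n - s + 1 := by
      rw [hA, Finset.card_insert_of_notMem huSc, Finset.card_compl, hScard]
    have hAc : Aᶜ = S.erase u := by
      ext x
      simp only [hA, Finset.mem_compl, Finset.mem_insert, Finset.mem_erase, not_or, not_not]
    have hkey : ∀ w ∈ A, nin G Aᶜ w + 1 ≤ nin G A w := by
      intro w hw
      rw [hAc]
      rcases Finset.mem_insert.mp hw with hwu | hwSc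
      · subst hwu
        have e1 : nin G A w = nin G Sᶜ w := by
          rw [hA, nin_insert G huSc]
          simp [G.irrefl]
        have e2 : nin G S w = nin G (S.erase w) w + (if G.Adj w w then 1 else 0) := by
          conv_lhs => rw [← Finset.insert_erase huS]
          rw [nin_insert G (Finset.notMem_erase w S)]
        rw [if_neg (G.irrefl)] at e2
        omega
      · have hvnotS : w ∉ S := Finset.mem_compl.mp hwSc
        have hs2 : insert w (S.erase u) ∈ Finset.powersetCard s Finset.univ := by
          rw [Finset.mem_powersetCard]
          refine ⟨Finset.subset_univ _, ?_⟩
          rw [Finset.card_insert_of_notMem (fun hmem => hvnotS (Finset.mem_of_mem_erase hmem)),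
            Finset.card_erase_of_mem huS, hScard]
          omega
        have hmin2 := hSmin _ hs2
        rw [cutZ_swap G huS hvnotS, bZ_eq_nin, bZ_eq_nin, cZ_eq_nin, cZ_eq_nin] at hmin2
        have e3 : nin G A w = nin G Sᶜ w + (if G.Adj w u then 1 else 0) := by
          rw [hA, nin_insert G huSc]
        have e4 : nin G S w = nin G (S.erase u) w + (if G.Adj w u then 1 else 0) := by
          conv_lhs => rw [← Finset.insert_erase huS]
          rw [nin_insert G (Finset.notMem_erase u S)]
        by_cases hadj : G.Adj u w
        · rw [if_pos hadj.symm] at e3 e4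
          rw [show adZ G u w = 1 from if_pos hadj] at hmin2
          omega
        · rw [if_neg (fun h => hadj h.symm)] at e3 e4
          rw [show adZ G u w = 0 from if_neg hadj] at hmin2
          omega
    refine ⟨↑A, ?_, ?_, ?_, ?_⟩
    · rw [Set.ncard_coe_finset, hAcard]
      omega
    · rw [Set.ssubset_univ_iff]
      intro hcontra
      have hcard := congrArg Set.ncard hcontra
      rw [Set.ncard_coe_finset, hAcard, Set.ncard_univ, Nat.card_eq_fintype_card] at hcard
      omega
    · rw [Set.ncard_coe_finset, hAcard]; omega
    · intro w hw
      have hwA : w ∈ A := Finset.mem_coe.mp hw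
      rw [show ((↑A : Set V))ᶜ = ↑(Aᶜ) from (Finset.coe_compl A).symm]
      rw [degIn_coe, degIn_coe, Set.ncard_coe_finset, Set.ncard_coe_finset,
        Finset.card_compl, hAcard]
      have hd := hkey w hwA
      have hdle : nin G Aᶜ w ≤ s - 1 := by
        have h1 : nin G Aᶜ w ≤ (Aᶜ).card := Finset.card_filter_le _ _
        rw [Finset.card_compl, hAcard] at h1
        omega
      rw [show n - s + 1 - 1 = n - s from by omega, show n - (n - s + 1) = s - 1 from by omega]
      set d0 := nin G Aᶜ w
      set d1 := nin G A w
      calc d0 * (n - s) ≤ d0 * ((s - 1) + 1) := Nat.mul_le_mul_left d0 (by omega)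
        _ = d0 * (s - 1) + d0 := by ring
        _ ≤ d0 * (s - 1) + (s - 1) := by omega
        _ = (d0 + 1) * (s - 1) := by ring
        _ ≤ d1 * (s - 1) := Nat.mul_le_mul_right (s - 1) hd
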